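/- Let R be a commutative ring, u, v, u′, v′ ∈ R, and θ a unit of R with v − u = θ·(v′ − u′). Set h = u + v, t = −u·v, h′ = u′ + v′, t′ = −u′·v′, let A = R[X]/((X − u)(X − v)) and A′ = R[X]/((X − u′)(X − v′)) with counits ε, ε′ and comultiplications Δ, Δ′ defined on the bases (1, X) as usual, and let f : A → A′ be the R-algebra isomorphism determined by X ↦ θ·(X − u′) + u. Then for every x ∈ A: ε′(θ⁻¹·f(x)) = ε(x) and (f ⊗ f)(Δ(x)) = Δ′(θ·f(x)). In other words, f is an isomorphism of Frobenius algebras from A onto the θ⁻¹-twist of A′. -/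

import Mathlib

open Polynomial
open scoped TensorProduct

/-- The algebra `R[X]/((X − u)(X − v))`. -/
noncomputable abbrev Auv (R : Type*) [CommRing R] (u v : R) : Type _ :=
  AdjoinRoot ((X - C u) * (X - C v))

/-- The image of the variable `X` in `R[X]/((X − u)(X − v))`. -/
noncomputable def rootUv (R : Type*) [CommRing R] (u v : R) : Auv R u v :=
  AdjoinRoot.root _

theorem Auv.repr {R : Type*} [CommRing R] (u v : R) (x : Auv R u v) :
    ∃ a b : R, x = algebraMap R _ a + b • rootUv R u v := by
  have hm : ((X - C u) * (X - C v)).Monic := (monic_X_sub_C u).mul (monic_X_sub_C v)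
  rcases subsingleton_or_nontrivial R with hR | hR
  · haveI := Module.subsingleton R (Auv R u v)
    exact ⟨0, 0, Subsingleton.elim _ _⟩
  induction x using AdjoinRoot.induction_on with
  | ih p =>
    have hdeg : ((X - C u) * (X - C v)).degree = 2 := by
      rw [degree_eq_natDegree hm.ne_zero, (monic_X_sub_C u).natDegree_mul (monic_X_sub_C v),
        natDegree_X_sub_C, natDegree_X_sub_C]; rfl
    have h1 : (p %ₘ ((X - C u) * (X - C v))).degree ≤ 1 := by
      have := degree_modByMonic_lt p hm
      rw [hdeg] at this
      exact Order.le_of_lt_succ (by exact_mod_cast this)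
    refine ⟨(p %ₘ ((X - C u) * (X - C v))).coeff 0, (p %ₘ ((X - C u) * (X - C v))).coeff 1, ?_⟩
    have key : AdjoinRoot.mk ((X - C u) * (X - C v)) p
        = AdjoinRoot.mk ((X - C u) * (X - C v)) (p %ₘ ((X - C u) * (X - C v))) := by
      conv_lhs => rw [← modByMonic_add_div p ((X - C u) * (X - C v))]
      rw [map_add, map_mul, AdjoinRoot.mk_self, zero_mul, add_zero]
    rw [key]
    conv_lhs => rw [eq_X_add_C_of_degree_le_one h1]
    rw [map_add, map_mul, AdjoinRoot.mk_X, AdjoinRoot.mk_C, AdjoinRoot.mk_C]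
    rw [add_comm, Algebra.smul_def, AdjoinRoot.algebraMap_eq]
    rfl

set_option maxHeartbeats 1000000 in
/-- With `h = u + v`, `t = −u·v`, `h′ = u′ + v′`, `t′ = −u′·v′`,
`A = R[X]/((X−u)(X−v))`, `A′ = R[X]/((X−u′)(X−v′))` with the usual counits and
comultiplications, `θ` a unit with `v − u = θ·(v′ − u′)`, and `f : A ≅ A′` the
`R`-algebra isomorphism determined by `X ↦ θ·(X − u′) + u`: for every `x ∈ A`,
`ε′(θ⁻¹·f(x)) = ε(x)` and `(f ⊗ f)(Δ(x)) = Δ′(θ·f(x))`; i.e. `f` is an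
isomorphism of Frobenius algebras from `A` onto the `θ⁻¹`-twist of `A′`. -/
theorem stmt11 {R : Type*} [CommRing R] (u v u' v' θ θinv : R)
    (hθ : θ * θinv = 1) (hc : v - u = θ * (v' - u'))
    (ε : Auv R u v →ₗ[R] R)
    (hε1 : ε 1 = 0) (hεX : ε (rootUv R u v) = 1)
    (Δ : Auv R u v →ₗ[R] Auv R u v ⊗[R] Auv R u v)
    (hΔ1 : Δ 1 = rootUv R u v ⊗ₜ[R] 1 + 1 ⊗ₜ[R] rootUv R u v
        - (u + v) • ((1 : Auv R u v) ⊗ₜ[R] 1))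
    (hΔX : Δ (rootUv R u v) = rootUv R u v ⊗ₜ[R] rootUv R u v
        + (-(u * v)) • ((1 : Auv R u v) ⊗ₜ[R] 1))
    (ε' : Auv R u' v' →ₗ[R] R)
    (hε'1 : ε' 1 = 0) (hε'X : ε' (rootUv R u' v') = 1)
    (Δ' : Auv R u' v' →ₗ[R] Auv R u' v' ⊗[R] Auv R u' v')
    (hΔ'1 : Δ' 1 = rootUv R u' v' ⊗ₜ[R] 1 + 1 ⊗ₜ[R] rootUv R u' v'
        - (u' + v') • ((1 : Auv R u' v') ⊗ₜ[R] 1))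
    (hΔ'X : Δ' (rootUv R u' v') = rootUv R u' v' ⊗ₜ[R] rootUv R u' v'
        + (-(u' * v')) • ((1 : Auv R u' v') ⊗ₜ[R] 1))
    (f : Auv R u v ≃ₐ[R] Auv R u' v')
    (hf : f (rootUv R u v) = θ • rootUv R u' v'
        - algebraMap R (Auv R u' v') (θ * u') + algebraMap R (Auv R u' v') u) :
    (∀ x, ε' (θinv • f x) = ε x) ∧
      (∀ x, TensorProduct.map f.toLinearMap f.toLinearMap (Δ x) = Δ' (θ • f x)) := by
  have hv : v = u + θ * (v' - u') := by linear_combination hc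
  subst hv
  constructor
  · intro x
    obtain ⟨a, b, rfl⟩ := Auv.repr _ _ x
    simp only [map_add, map_smul, hf, Algebra.algebraMap_eq_smul_one, map_one, smul_add,
      smul_sub, smul_smul, map_sub, hε1, hεX, hε'1, hε'X, smul_eq_mul, mul_zero, mul_one,
      sub_zero, add_zero, zero_add]
    linear_combination b * hθ
  · intro x
    obtain ⟨a, b, rfl⟩ := Auv.repr _ _ x
    simp only [map_add, map_smul, hf, Algebra.algebraMap_eq_smul_one, map_one, hΔ1, hΔX,
      hΔ'1, hΔ'X, smul_add, smul_sub, smul_smul, map_sub, TensorProduct.map_tmul,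
      AlgEquiv.toLinearMap_apply, TensorProduct.tmul_add, TensorProduct.add_tmul,
      TensorProduct.sub_tmul, TensorProduct.tmul_sub, ← TensorProduct.smul_tmul',
      TensorProduct.tmul_smul]
    match_scalars <;> ring
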